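/- The unitary U defined in terms of the wavelet filter coefficients admits the decomposition U = Σ_{ℓ=0}^{M−1} h_ℓ U_ℓ, where U_ℓ = P_ℓ if ℓ is odd and U_ℓ = (Z ⊗ I_{n−1}) P_ℓ if ℓ is even. -/

import Mathlib

open Matrix

/-- `P_ℓ = Σ_{j=0}^{N/2−1}(|j⟩⟨2j+ℓ mod N| + |N/2+j⟩⟨2j+1−ℓ mod N|)` on `N = 2^n`. -/
def Pmat (n ℓ : ℕ) : Matrix (Fin (2^n)) (Fin (2^n)) ℂ :=
  fun r c =>
    if (r : ℕ) < 2^n / 2 then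
      (if (c : ℕ) = (2 * (r : ℕ) + ℓ) % 2^n then 1 else 0)
    else
      (if (c : ℕ) = (2 * ((r : ℕ) - 2^n / 2) + 1 + (2^n - ℓ)) % 2^n then 1 else 0)

/-- `Z ⊗ I_{n−1}`: diagonal, `+1` on the first `N/2` basis vectors, `−1` on the last `N/2`. -/
def Zmat (n : ℕ) : Matrix (Fin (2^n)) (Fin (2^n)) ℂ :=
  fun i j => if i = j then (if (i : ℕ) < 2^n / 2 then 1 else -1) else 0

/-- The `N×N` matrix `U`: upper half `H_{ic} = h_{(c−2i) mod N}` (rows `0 ≤ i < N/2`)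
and lower half `G'_{ic} = (−1)^{2i+2−c} h_{(2i+1−c) mod N}` (rows `N/2 ≤ row < N`,
`i = row − N/2`), the filter `h : ℤ → ℝ` vanishing outside `[0, M−1]`.
(The row-index of the filter in the lower half is `2i+1−c`, matching the
displayed kernel matrix; the sign `(−1)^{2i+2−c}` is as in the paper.) -/
noncomputable def Umat (n : ℕ) (h : ℤ → ℝ) : Matrix (Fin (2^n)) (Fin (2^n)) ℂ :=
  fun r c =>
    if (r : ℕ) < 2^n / 2 then
      ((h (((c : ℤ) - 2 * ((r : ℕ) : ℤ)) % (2^n : ℤ))) : ℂ)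
    else
      ((((-1 : ℝ) ^ ((2 * ((((r : ℕ) - 2^n / 2 : ℕ)) : ℤ) + 2 - (c : ℤ))) *
        h ((2 * ((((r : ℕ) - 2^n / 2 : ℕ)) : ℤ) + 1 - (c : ℤ)) % (2^n : ℤ))) : ℝ) : ℂ)

lemma Zmat_eq_diagonal (n : ℕ) :
    Zmat n = Matrix.diagonal (fun i : Fin (2^n) => if (i:ℕ) < 2^n/2 then (1:ℂ) else -1) := by
  ext i j
  by_cases hij : i = j <;> simp [Zmat, Matrix.diagonal, hij]

lemma int_key_add (N x c ℓ : ℤ) (hN : 0 < N) (hc0 : 0 ≤ c) (hcN : c < N)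
    (hl0 : 0 ≤ ℓ) (hlN : ℓ < N) :
    c = (x + ℓ) % N ↔ ℓ = (c - x) % N := by
  constructor
  · rintro rfl
    rw [Int.sub_emod, Int.emod_emod_of_dvd _ dvd_rfl, ← Int.sub_emod,
      show x + ℓ - x = ℓ by ring, Int.emod_eq_of_lt hl0 hlN]
  · rintro rfl
    rw [Int.add_emod, Int.emod_emod_of_dvd _ dvd_rfl, ← Int.add_emod,
      show x + (c - x) = c by ring, Int.emod_eq_of_lt hc0 hcN]

lemma int_key_sub (N x c ℓ : ℤ) (hN : 0 < N) (hc0 : 0 ≤ c) (hcN : c < N)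
    (hl0 : 0 ≤ ℓ) (hlN : ℓ < N) :
    c = (x - ℓ) % N ↔ ℓ = (x - c) % N := by
  constructor
  · rintro rfl
    rw [Int.sub_emod x, Int.emod_emod_of_dvd _ dvd_rfl, ← Int.sub_emod,
      show x - (x - ℓ) = ℓ by ring, Int.emod_eq_of_lt hl0 hlN]
  · rintro rfl
    rw [Int.sub_emod x, Int.emod_emod_of_dvd _ dvd_rfl, ← Int.sub_emod,
      show x - (x - c) = c by ring, Int.emod_eq_of_lt hc0 hcN]

theorem U_lcu_decomposition (n M K : ℕ) (hn : 1 ≤ n) (hK : 0 < K) (hM : M = 2 * K)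
    (hNM : 2 * M ≤ 2^n) (h : ℤ → ℝ)
    (hsupp : ∀ k : ℤ, (k < 0 ∨ (M : ℤ) ≤ k) → h k = 0) :
    Umat n h =
      ∑ ℓ ∈ Finset.range M,
        ((h ℓ : ℝ) : ℂ) • (if ℓ % 2 = 1 then Pmat n ℓ else Zmat n * Pmat n ℓ) := by
  have hNpos : (0:ℤ) < (2^n : ℤ) := by positivity
  have h2N : 2 * (2^n/2) = 2^n := by
    have : 2^n = 2 * 2^(n-1) := by
      conv_lhs => rw [show n = (n-1)+1 by omega, pow_succ]
      ring
    omega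
  have hMN : M ≤ 2^n := by omega
  ext r c
  rw [Zmat_eq_diagonal, Matrix.sum_apply]
  have hc : (c:ℕ) < 2^n := c.isLt
  have hcz : ((c:ℕ):ℤ) < (2^n:ℤ) := by exact_mod_cast hc
  by_cases hr : (r:ℕ) < 2^n/2
  · -- upper half
    set a : ℤ := (((c:ℕ):ℤ) - 2*((r:ℕ):ℤ)) % ((2:ℤ)^n) with ha
    have ha0 : 0 ≤ a := Int.emod_nonneg _ (by positivity)
    have haN : a < 2^n := Int.emod_lt_of_pos _ hNpos
    have hLHS : Umat n h r c = ((h a : ℝ) : ℂ) := by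
      simp only [Umat, if_pos hr]
      rfl
    rw [hLHS]
    have key : ∀ ℓ ∈ Finset.range M,
        (((h ℓ : ℝ):ℂ) • (if ℓ % 2 = 1 then Pmat n ℓ
          else Matrix.diagonal (fun i : Fin (2^n) => if (i:ℕ) < 2^n/2 then (1:ℂ) else -1)
            * Pmat n ℓ)) r c
          = if ℓ = a.toNat then ((h a : ℝ):ℂ) else 0 := by
      intro ℓ hℓ
      have hℓM : ℓ < M := Finset.mem_range.mp hℓ
      have hPval : Pmat n ℓ r c = if ℓ = a.toNat then 1 else 0 := by
        rw [Pmat, if_pos hr]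
        congr 1
        rw [eq_iff_iff]
        have hcond : (c:ℕ) = (2*(r:ℕ)+ℓ) % 2^n ↔ ((ℓ:ℕ):ℤ) = a := by
          rw [show ((c:ℕ) = (2*(r:ℕ)+ℓ) % 2^n) ↔ (((c:ℕ):ℤ) = (((2*(r:ℕ)+ℓ) % 2^n : ℕ):ℤ)) from
            ⟨fun h' => by exact_mod_cast h', fun h' => by exact_mod_cast h'⟩]
          push_cast
          exact int_key_add ((2:ℤ)^n) (2*((r:ℕ):ℤ)) ((c:ℕ):ℤ) ((ℓ:ℕ):ℤ) hNpos
            (by positivity) hcz (by positivity) (by exact_mod_cast lt_of_lt_of_le hℓM hMN)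
        rw [hcond]
        omega
      have hmul : (Matrix.diagonal (fun i : Fin (2^n) => if (i:ℕ) < 2^n/2 then (1:ℂ) else -1)
          * Pmat n ℓ) r c = Pmat n ℓ r c := by
        rw [Matrix.diagonal_mul, if_pos hr, one_mul]
      by_cases hp : ℓ % 2 = 1
      · rw [if_pos hp, Matrix.smul_apply, hPval, smul_eq_mul]
        by_cases he : ℓ = a.toNat
        · rw [if_pos he, if_pos he, mul_one, he, Int.toNat_of_nonneg ha0]
        · rw [if_neg he, if_neg he, mul_zero]
      · rw [if_neg hp, Matrix.smul_apply, hmul, hPval, smul_eq_mul]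
        by_cases he : ℓ = a.toNat
        · rw [if_pos he, if_pos he, mul_one, he, Int.toNat_of_nonneg ha0]
        · rw [if_neg he, if_neg he, mul_zero]
    rw [Finset.sum_congr rfl key,
      Finset.sum_ite_eq' (Finset.range M) a.toNat (fun _ => ((h a : ℝ):ℂ))]
    split_ifs with hm
    · rfl
    · rw [Finset.mem_range, not_lt] at hm
      rw [hsupp a (Or.inr (by omega))]
      simp
  · -- lower half
    set i : ℕ := (r:ℕ) - 2^n/2 with hi
    have hiN : (i:ℕ) < 2^n/2 := by
      have := r.isLt
      omega
    set b : ℤ := (2*((i:ℕ):ℤ) + 1 - ((c:ℕ):ℤ)) % ((2:ℤ)^n) with hb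
    have hb0 : 0 ≤ b := Int.emod_nonneg _ (by positivity)
    have hbN : b < 2^n := Int.emod_lt_of_pos _ hNpos
    have hbmod : (2*((i:ℕ):ℤ) + 2 - ((c:ℕ):ℤ)) % 2 = (b + 1) % 2 := by
      have h1 : b % (2:ℤ) = (2*((i:ℕ):ℤ) + 1 - ((c:ℕ):ℤ)) % 2 := by
        have hdvd : (2:ℤ) ∣ (2:ℤ)^n := dvd_pow_self 2 (by omega)
        calc b % 2 = (2*((i:ℕ):ℤ) + 1 - ((c:ℕ):ℤ)) % (2^n) % 2 := by rw [hb]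
        _ = (2*((i:ℕ):ℤ) + 1 - ((c:ℕ):ℤ)) % 2 := Int.emod_emod_of_dvd _ hdvd
      omega
    have hLHS : Umat n h r c =
        (((-1:ℝ) ^ (2*((i:ℕ):ℤ) + 2 - ((c:ℕ):ℤ)) : ℝ) : ℂ) * ((h b : ℝ) : ℂ) := by
      simp only [Umat, if_neg hr, Complex.ofReal_mul]
      rfl
    rw [hLHS]
    have hsign : (((-1:ℝ) ^ (2*((i:ℕ):ℤ) + 2 - ((c:ℕ):ℤ)) : ℝ) : ℂ)
        = if b.toNat % 2 = 1 then 1 else -1 := by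
      by_cases hbp : b % 2 = 1
      · have hev : Even (2*((i:ℕ):ℤ) + 2 - ((c:ℕ):ℤ)) := by
          rw [Int.even_iff]; omega
        rw [hev.neg_one_zpow, if_pos (by omega : b.toNat % 2 = 1)]
        norm_num
      · have hod : Odd (2*((i:ℕ):ℤ) + 2 - ((c:ℕ):ℤ)) := by
          rw [Int.odd_iff]; omega
        rw [hod.neg_one_zpow, if_neg (by omega : ¬ b.toNat % 2 = 1)]
        norm_num
    rw [hsign]
    have key : ∀ ℓ ∈ Finset.range M,
        (((h ℓ : ℝ):ℂ) • (if ℓ % 2 = 1 then Pmat n ℓ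
          else Matrix.diagonal (fun j : Fin (2^n) => if (j:ℕ) < 2^n/2 then (1:ℂ) else -1)
            * Pmat n ℓ)) r c
          = if ℓ = b.toNat then (if b.toNat % 2 = 1 then (1:ℂ) else -1) * ((h b : ℝ):ℂ)
            else 0 := by
      intro ℓ hℓ
      have hℓM : ℓ < M := Finset.mem_range.mp hℓ
      have hℓN : ℓ ≤ 2^n := by omega
      have hPval : Pmat n ℓ r c = if ℓ = b.toNat then 1 else 0 := by
        rw [Pmat, if_neg hr, ← hi]
        congr 1
        rw [eq_iff_iff]
        have hz : ((2*i+1+(2^n-ℓ) : ℕ) : ℤ) = (2*((i:ℕ):ℤ)+1-((ℓ:ℕ):ℤ)) + 2^n := by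
          push_cast [Nat.cast_sub hℓN]
          ring
        have hXZ : (((2*i+1+(2^n-ℓ)) % 2^n : ℕ) : ℤ)
            = (2*((i:ℕ):ℤ)+1 - ((ℓ:ℕ):ℤ)) % ((2:ℤ)^n) := by
          rw [Int.natCast_mod, hz]
          push_cast
          simp
        have hcond : ((c:ℕ) = (2*i+1+(2^n-ℓ)) % 2^n) ↔ ((ℓ:ℕ):ℤ) = b := by
          rw [← Nat.cast_inj (R := ℤ), hXZ]
          exact int_key_sub ((2:ℤ)^n) (2*((i:ℕ):ℤ)+1) ((c:ℕ):ℤ) ((ℓ:ℕ):ℤ) hNpos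
            (by positivity) hcz (by positivity)
            (by exact_mod_cast lt_of_lt_of_le hℓM (by omega : M ≤ 2^n))
        rw [hcond]
        omega
      by_cases hp : ℓ % 2 = 1
      · rw [if_pos hp, Matrix.smul_apply, hPval, smul_eq_mul]
        by_cases he : ℓ = b.toNat
        · rw [if_pos he, if_pos he, mul_one,
            if_pos (by omega : b.toNat % 2 = 1), one_mul, he, Int.toNat_of_nonneg hb0]
        · rw [if_neg he, if_neg he, mul_zero]
      · rw [if_neg hp, Matrix.smul_apply, Matrix.diagonal_mul, if_neg hr, hPval, smul_eq_mul]
        by_cases he : ℓ = b.toNat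
        · rw [if_pos he, if_pos he, if_neg (by omega : ¬ b.toNat % 2 = 1),
            he, Int.toNat_of_nonneg hb0]
          ring
        · rw [if_neg he, if_neg he, mul_zero, mul_zero]
    rw [Finset.sum_congr rfl key,
      Finset.sum_ite_eq' (Finset.range M) b.toNat
        (fun _ => (if b.toNat % 2 = 1 then (1:ℂ) else -1) * ((h b : ℝ):ℂ))]
    by_cases hm : b.toNat ∈ Finset.range M
    · rw [if_pos hm]
    · rw [if_neg hm]
      rw [Finset.mem_range, not_lt] at hm
      rw [hsupp b (Or.inr (by omega))]
      simp
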